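/- Let q ≥ 2 be an integer, let a be a q-fractal real formal power series, and for 1 ≤ n ≤ q−1 set l_n = [x^n] log a, where log is the ordinary formal power series logarithm. Then, with log_∘ the ∘-logarithm for the P_{[0,q]}-convolution: [x^N] log_∘ a = l_n whenever N = n·q^k with 1 ≤ n ≤ q−1 and k ≥ 0, and [x^N] log_∘ a = 0 for all other N (i.e., for N = 0 and for every N ≥ 1 having at least two nonzero base-q digits). Equivalently, log_∘ a = Σ_{n=1}^{q−1} l_n · Σ_{k≥0} x^{n·q^k}. -/

import Mathlib

open PowerSeries Finset

open scoped Classical in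
/-- The `(N,M)` entry of the generalized Sierpinski matrix `P_{[0,q]}`. -/
noncomputable def Wq (q N M : ℕ) : ℝ :=
  if ∀ r : ℕ, 1 ≤ r → M % q ^ r ≤ N % q ^ r then 1 else 0

/-- Convolution of formal power series with respect to a weight `w`. -/
noncomputable def conv (w : ℕ → ℕ → ℝ) (a b : PowerSeries ℝ) : PowerSeries ℝ :=
  PowerSeries.mk fun n => ∑ m ∈ Finset.range (n + 1), w n m * coeff m a * coeff (n - m) b

/-- Iterated `∘`-power `f^{(k)}` with respect to a weight `w`. -/
noncomputable def convPow (w : ℕ → ℕ → ℝ) (f : PowerSeries ℝ) : ℕ → PowerSeries ℝ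
  | 0 => 1
  | k + 1 => conv w f (convPow w f k)

/-- The `∘`-logarithm `log_∘ f = Σ_{n≥1} ((−1)^{n−1}/n)·(f−1)^{(n)}`. -/
noncomputable def convLog (w : ℕ → ℕ → ℝ) (f : PowerSeries ℝ) : PowerSeries ℝ :=
  PowerSeries.mk fun N =>
    ∑ n ∈ Finset.Icc 1 N, ((-1 : ℝ) ^ (n - 1) / n) * coeff N (convPow w (f - 1) n)

/-- The ordinary formal power series logarithm. -/
noncomputable def logSeries (f : PowerSeries ℝ) : PowerSeries ℝ :=
  PowerSeries.mk fun N =>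
    ∑ n ∈ Finset.Icc 1 N, ((-1 : ℝ) ^ (n - 1) / n) * coeff N ((f - 1) ^ n)

/-- A real formal power series is `q`-fractal if `a_0 = 1` and
`a_{qn+i} = a_n·a_i` for all `n ≥ 0` and `0 ≤ i < q`. -/
def IsFractal (q : ℕ) (a : PowerSeries ℝ) : Prop :=
  coeff 0 a = 1 ∧ ∀ n i : ℕ, i < q → coeff (q * n + i) a = coeff n a * coeff i a

section Aux
variable {q : ℕ}

lemma Wq_eq_one {N M : ℕ} (h : ∀ r : ℕ, M % q ^ r ≤ N % q ^ r) : Wq q N M = 1 := by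
  unfold Wq; rw [if_pos (fun r _ => h r)]

lemma Wq_eq_zero {N M : ℕ} (h : ¬ ∀ r : ℕ, M % q ^ r ≤ N % q ^ r) : Wq q N M = 0 := by
  unfold Wq; rw [if_neg]
  intro hc
  exact h fun r => by
    rcases Nat.eq_zero_or_pos r with h0 | h0
    · simp [h0, Nat.mod_one]
    · exact hc r h0

lemma lt_pow_add (hq : 2 ≤ q) (M N : ℕ) : M < q ^ (M + N) :=
  lt_of_lt_of_le (Nat.lt_two_pow_self (n := M))
    (le_trans (Nat.pow_le_pow_right (by norm_num) (Nat.le_add_right _ _)) (Nat.pow_le_pow_left hq _))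

lemma le_of_dig (hq : 2 ≤ q) {M N : ℕ} (h : ∀ r : ℕ, M % q ^ r ≤ N % q ^ r) : M ≤ N := by
  have hh := h (M + N)
  rwa [Nat.mod_eq_of_lt (lt_pow_add hq M N), Nat.mod_eq_of_lt (by rw [Nat.add_comm]; exact lt_pow_add hq N M)] at hh

lemma Wq_zero_right (N : ℕ) : Wq q N 0 = 1 := Wq_eq_one (by simp)

lemma Wq_eq_zero_of_gt (hq : 2 ≤ q) {N M : ℕ} (h : N < M) : Wq q N M = 0 :=
  Wq_eq_zero fun hc => absurd (le_of_dig hq hc) (by omega)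

lemma dig_sub (hq : 2 ≤ q) {M N : ℕ} (h : ∀ r : ℕ, M % q ^ r ≤ N % q ^ r) (r : ℕ) :
    M % q ^ r + (N - M) % q ^ r = N % q ^ r := by
  have hP0 : 0 < q ^ r := Nat.pow_pos (by omega)
  have hr := h r
  have hMN : M ≤ N := le_of_dig hq h
  generalize hg : q ^ r = P at hr hP0 ⊢
  have hdiv : M / P ≤ N / P := Nat.div_le_div_right hMN
  have h1 := Nat.div_add_mod M P
  have h2 := Nat.div_add_mod N P
  have hmul : P * (M / P) ≤ P * (N / P) := Nat.mul_le_mul_left _ hdiv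
  have hn : N % P < P := Nat.mod_lt _ hP0
  have key : N - M = P * (N / P - M / P) + (N % P - M % P) := by
    rw [Nat.mul_sub]; omega
  have e1 : (P * (N / P - M / P) + (N % P - M % P)) % P = (N % P - M % P) % P :=
    Nat.mul_add_mod _ _ _
  rw [← key] at e1
  have e2 : (N % P - M % P) % P = N % P - M % P := Nat.mod_eq_of_lt (by omega)
  omega

lemma coeff_conv (w : ℕ → ℕ → ℝ) (f g : PowerSeries ℝ) (N : ℕ) :
    coeff N (conv w f g) = ∑ m ∈ range (N + 1), w N m * coeff m f * coeff (N - m) g := by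
  simp [conv]

end Aux

lemma coeff_one_add_X_pow (R : Type*) [CommSemiring R] (s k : ℕ) :
    coeff k ((1 + X : PowerSeries R) ^ s) = (s.choose k : R) := by
  induction s generalizing k with
  | zero =>
    cases k with
    | zero => simp
    | succ k => simp [PowerSeries.coeff_one]
  | succ s ih =>
    rw [pow_succ, mul_add, mul_one, map_add]
    cases k with
    | zero => simp [ih, PowerSeries.coeff_zero_mul_X]
    | succ k =>
      rw [ih, PowerSeries.coeff_succ_mul_X, ih, Nat.choose_succ_succ (s) (k)]
      push_cast; ring

noncomputable def Sser (i : ℕ) : PowerSeries ℝ :=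
  PowerSeries.mk fun m => (-1 : ℝ) ^ m * ((i + m - 1).choose m : ℝ)

lemma Sser_zero : Sser 0 = 1 := by
  ext m
  cases m with
  | zero => simp [Sser]
  | succ m => simp [Sser, PowerSeries.coeff_one, Nat.choose_eq_zero_of_lt (by omega : m + 1 - 1 < m + 1)]

lemma one_add_X_mul_Sser (i : ℕ) : (1 + X) * Sser (i + 1) = Sser i := by
  ext m
  rw [add_mul, one_mul, map_add]
  cases m with
  | zero => simp [Sser]
  | succ m =>
    rw [PowerSeries.coeff_succ_X_mul]
    simp only [Sser, PowerSeries.coeff_mk]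
    have h1 : i + 1 + (m + 1) - 1 = (i + m) + 1 := by omega
    have h2 : i + 1 + m - 1 = i + m := by omega
    have h3 : i + (m + 1) - 1 = i + m := by omega
    rw [h1, h2, h3, Nat.choose_succ_succ (i + m) m]
    push_cast; ring

lemma pow_mul_Sser (i : ℕ) : (1 + X) ^ i * Sser i = 1 := by
  induction i with
  | zero => rw [pow_zero, one_mul, Sser_zero]
  | succ i ih => rw [pow_succ, mul_assoc, one_add_X_mul_Sser, ih]

lemma sum_S (i j : ℕ) (hj : 1 ≤ j) :
    ∑ d ∈ range (j + 1), (-1 : ℝ) ^ d * ((i + d - 1).choose d : ℝ) * (i.choose (j - d) : ℝ) = 0 := by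
  have h0 : coeff j ((1 + X) ^ i * Sser i) = 0 := by
    rw [pow_mul_Sser, PowerSeries.coeff_one, if_neg (by omega)]
  rw [PowerSeries.coeff_mul, Finset.Nat.sum_antidiagonal_eq_sum_range_succ_mk] at h0
  rw [← Finset.sum_range_reflect]
  rw [show j + 1 - 1 = j from rfl] at *
  calc ∑ d ∈ range (j + 1), (-1:ℝ)^(j - d) * ((i + (j - d) - 1).choose (j - d) : ℝ) * (i.choose (j - (j - d)) : ℝ)
      = ∑ d ∈ range (j + 1), coeff d ((1 + X : PowerSeries ℝ) ^ i) * coeff (j - d) (Sser i) := by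
        apply Finset.sum_congr rfl
        intro d hd
        rw [Finset.mem_range] at hd
        rw [coeff_one_add_X_pow, show j - (j - d) = d by omega]
        simp only [Sser, PowerSeries.coeff_mk]
        ring
    _ = 0 := h0

lemma coeff_natCast_mul {R : Type*} [CommSemiring R] (c : ℕ) (φ : PowerSeries R) (k : ℕ) :
    coeff k ((c : PowerSeries R) * φ) = (c : R) * coeff k φ := by
  rw [← map_natCast C c, PowerSeries.coeff_C_mul]

lemma inner_id (n i j : ℕ) :
    ∑ s ∈ range (n + 1), (-1 : ℝ) ^ (n - s) * (n.choose s : ℝ) * (s.choose i : ℝ) * (s.choose j : ℝ)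
      = if n ≤ i + j then (n.choose i : ℝ) * (i.choose (i + j - n) : ℝ) else 0 := by
  set A := PowerSeries ℝ
  set y : PowerSeries A := PowerSeries.C PowerSeries.X with hy
  have hyp : ∀ s : ℕ, (1 + y : PowerSeries A) ^ s = PowerSeries.C ((1 + X) ^ s) := by
    intro s
    rw [map_pow, map_add, map_one]
  have hE : (X * (1 + y) + y : PowerSeries A) = (1 + X) * (1 + y) + (-1) := by ring
  -- way 2
  have way2 : coeff j (coeff i ((X * (1 + y) + y : PowerSeries A) ^ n))
      = ∑ s ∈ range (n + 1),
          (-1 : ℝ) ^ (n - s) * (n.choose s : ℝ) * (s.choose i : ℝ) * (s.choose j : ℝ) := by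
    rw [hE, add_pow, map_sum, map_sum]
    apply Finset.sum_congr rfl
    intro s _
    rw [mul_pow, hyp]
    have hneg : ((-1 : PowerSeries A)) ^ (n - s) * ((n.choose s : PowerSeries A))
        = PowerSeries.C ((-1 : A) ^ (n - s) * (n.choose s : A)) := by
      rw [map_mul, map_pow, map_neg, map_one, map_natCast]
    rw [mul_assoc, hneg, mul_assoc, ← map_mul, PowerSeries.coeff_mul_C,
      coeff_one_add_X_pow]
    have hneg2 : ((-1 : A)) ^ (n - s) * ((n.choose s : A))
        = PowerSeries.C ((-1 : ℝ) ^ (n - s) * (n.choose s : ℝ)) := by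
      rw [map_mul, map_pow, map_neg, map_one, map_natCast]
    rw [mul_assoc, hneg2, coeff_natCast_mul, PowerSeries.coeff_mul_C, coeff_one_add_X_pow]
    ring
  -- way 1
  have way1 : coeff j (coeff i ((X * (1 + y) + y : PowerSeries A) ^ n))
      = if n ≤ i + j then (n.choose i : ℝ) * (i.choose (i + j - n) : ℝ) else 0 := by
    rw [add_pow, map_sum]
    have hterm : ∀ s ∈ range (n + 1),
        coeff i ((X * (1 + y)) ^ s * y ^ (n - s) * (n.choose s : PowerSeries A))
          = if s = i then (1 + X) ^ s * X ^ (n - s) * (n.choose s : A) else 0 := by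
      intro s _
      have : (X * (1 + y)) ^ s * y ^ (n - s) * (n.choose s : PowerSeries A)
          = PowerSeries.C ((1 + X) ^ s * X ^ (n - s) * (n.choose s : A)) * X ^ s := by
        rw [mul_pow, hyp, hy, ← map_pow, map_mul, map_mul, map_natCast]
        ring
      rw [this, PowerSeries.coeff_mul_X_pow', PowerSeries.coeff_C]
      by_cases h1 : s ≤ i
      · rw [if_pos h1]
        by_cases h2 : s = i
        · rw [if_pos (by omega : i - s = 0), if_pos h2, h2]
        · rw [if_neg (by omega : ¬ i - s = 0), if_neg h2]
      · rw [if_neg h1, if_neg (by omega : ¬ s = i)]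
    rw [Finset.sum_congr rfl hterm]
    by_cases hin : i ≤ n
    · rw [Finset.sum_ite_eq' (range (n + 1)) i, if_pos (by simp [Nat.lt_succ_iff, hin])]
      have : ((n.choose i : A)) = PowerSeries.C ((n.choose i : ℝ)) := by rw [map_natCast]
      rw [this, PowerSeries.coeff_mul_C, PowerSeries.coeff_mul_X_pow']
      by_cases h2 : n - i ≤ j
      · rw [if_pos h2, if_pos (by omega : n ≤ i + j), coeff_one_add_X_pow,
          show j - (n - i) = i + j - n by omega]
        ring
      · rw [if_neg h2, if_neg (by omega : ¬ n ≤ i + j), zero_mul]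
    · rw [Finset.sum_ite_eq' (range (n + 1)) i, if_neg (by simp [Nat.lt_succ_iff]; omega)]
      have : (n.choose i : ℝ) = 0 := by
        rw [Nat.choose_eq_zero_of_lt (by omega)]; norm_num
      rw [this]
      by_cases h2 : n ≤ i + j
      · rw [if_pos h2, zero_mul, map_zero]
      · rw [if_neg h2, map_zero]
  rw [← way2, way1]

lemma NID (i d : ℕ) (hi : 1 ≤ i) : i * (i + d).choose d = (i + d) * (i + d - 1).choose d := by
  cases d with
  | zero => simp
  | succ d =>
    have h1 : (i + (d + 1)).choose (d + 1) = (i + d).choose d + (i + d).choose (d + 1) := by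
      have := Nat.choose_succ_succ (i + d) d
      rw [show i + (d + 1) = (i + d) + 1 by omega, this]
    have h2 := Nat.choose_succ_right_eq (i + d) d
    rw [show i + d - d = i by omega] at h2
    rw [show i + (d + 1) - 1 = i + d by omega, h1]
    zify at h2 ⊢
    linear_combination -h2

lemma Kzero (i j B : ℕ) (hi : 1 ≤ i) (hj : 1 ≤ j) (hij : i + j ≤ B) :
    ∑ n ∈ Icc 1 B, ((-1 : ℝ) ^ (n - 1) / n) *
      (∑ s ∈ range (n + 1),
        (-1 : ℝ) ^ (n - s) * (n.choose s : ℝ) * (s.choose i : ℝ) * (s.choose j : ℝ)) = 0 := by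
  have step1 : ∀ n, ((-1 : ℝ) ^ (n - 1) / n) *
      (∑ s ∈ range (n + 1),
        (-1 : ℝ) ^ (n - s) * (n.choose s : ℝ) * (s.choose i : ℝ) * (s.choose j : ℝ))
      = ((-1 : ℝ) ^ (n - 1) / n) *
        (if n ≤ i + j then (n.choose i : ℝ) * (i.choose (i + j - n) : ℝ) else 0) := by
    intro n; rw [inner_id]
  simp only [step1]
  rw [← Finset.sum_subset (Finset.Icc_subset_Icc_right hij)
    (by
      intro n _ hn2
      simp only [Finset.mem_Icc, not_and, not_le] at hn2 ⊢
      rcases Finset.mem_Icc.mp ‹n ∈ Icc 1 B› with ⟨h1, _⟩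
      rw [if_neg (by omega : ¬ n ≤ i + j), mul_zero])]
  · -- sum over Icc 1 (i+j)
    have step2 : ∑ n ∈ Icc 1 (i + j), ((-1 : ℝ) ^ (n - 1) / n) *
        (if n ≤ i + j then (n.choose i : ℝ) * (i.choose (i + j - n) : ℝ) else 0)
        = ∑ n ∈ Icc i (i + j), ((-1 : ℝ) ^ (n - 1) / n) *
          ((n.choose i : ℝ) * (i.choose (i + j - n) : ℝ)) := by
      rw [← Finset.sum_subset (Finset.Icc_subset_Icc_left hi)]
      · apply Finset.sum_congr rfl
        intro n hn
        rcases Finset.mem_Icc.mp hn with ⟨_, h2⟩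
        rw [if_pos h2]
      · intro n hn hn2
        rcases Finset.mem_Icc.mp hn with ⟨h1, h2⟩
        simp only [Finset.mem_Icc, not_and, not_le] at hn2
        have : n < i := by omega
        rw [if_pos h2, Nat.choose_eq_zero_of_lt this]
        norm_num
    rw [step2, ← Finset.Ico_add_one_right_eq_Icc, Finset.sum_Ico_eq_sum_range, show i + j + 1 - i = j + 1 by omega]
    have step3 : ∀ d ∈ range (j + 1), ((-1 : ℝ) ^ (i + d - 1) / ((i + d : ℕ) : ℝ)) *
        (((i + d).choose i : ℝ) * (i.choose (i + j - (i + d)) : ℝ))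
        = ((-1 : ℝ) ^ (i - 1) / i) *
          ((-1 : ℝ) ^ d * (((i + d - 1).choose d : ℝ)) * (i.choose (j - d) : ℝ)) := by
      intro d hd
      have hid : (0 : ℝ) < ((i + d : ℕ) : ℝ) := by positivity
      have hi0 : (0 : ℝ) < (i : ℝ) := by positivity
      have hnid : (i : ℝ) * ((i + d).choose d : ℝ) = ((i + d : ℕ) : ℝ) * ((i + d - 1).choose d : ℝ) := by
        exact_mod_cast congrArg (Nat.cast : ℕ → ℝ) (NID i d hi)
      have hsymm : (i + d).choose i = (i + d).choose d := by
        have h := Nat.choose_symm (Nat.le_add_right i d)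
        rw [show i + d - i = d by omega] at h
        exact h.symm
      have frac : (((i + d).choose d : ℝ)) / ((i : ℝ) + d) = (((i + d - 1).choose d : ℝ)) / i := by
        rw [div_eq_div_iff (by positivity) (by positivity)]
        push_cast at hnid ⊢
        linear_combination hnid
      rw [show i + j - (i + d) = j - d by omega, hsymm,
        show i + d - 1 = (i - 1) + d by omega, pow_add]
      calc ((-1:ℝ) ^ (i-1) * (-1) ^ d / ((i + d : ℕ) : ℝ)) * ((((i+d).choose d : ℕ) : ℝ) * (i.choose (j-d) : ℝ))
          = ((-1:ℝ) ^ (i-1) * (-1) ^ d) * ((((i+d).choose d : ℕ) : ℝ) / ((i:ℝ) + d)) * (i.choose (j-d) : ℝ) := by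
            push_cast; ring
        _ = ((-1:ℝ) ^ (i-1) * (-1) ^ d) * ((((i + d - 1).choose d : ℕ) : ℝ) / (i:ℝ)) * (i.choose (j-d) : ℝ) := by
            rw [frac]
        _ = (-1:ℝ) ^ (i-1) / i * ((-1) ^ d * (((i - 1) + d).choose d : ℝ) * (i.choose (j-d) : ℝ)) := by
            rw [show i + d - 1 = (i - 1) + d by omega]
            push_cast; ring
    rw [Finset.sum_congr rfl step3, ← Finset.mul_sum]
    rw [sum_S i j hj, mul_zero]


section ConvAlg
variable (w : ℕ → ℕ → ℝ)

lemma conv_add_left (f g h : PowerSeries ℝ) : conv w (f + g) h = conv w f h + conv w g h := by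
  ext N
  simp [coeff_conv, mul_add, add_mul, Finset.sum_add_distrib]

lemma conv_one_left (hw : ∀ N, w N 0 = 1) (g : PowerSeries ℝ) : conv w 1 g = g := by
  ext N
  rw [coeff_conv, Finset.sum_eq_single 0]
  · simp [hw]
  · intro m _ hne
    simp [PowerSeries.coeff_one, hne]
  · intro h
    simp at h

lemma conv_add_right (f g h : PowerSeries ℝ) : conv w f (g + h) = conv w f g + conv w f h := by
  ext N
  simp [coeff_conv, mul_add, Finset.sum_add_distrib]

lemma conv_smul_right (c : ℝ) (f g : PowerSeries ℝ) : conv w f (c • g) = c • conv w f g := by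
  ext N
  simp only [coeff_conv, PowerSeries.coeff_smul, smul_eq_mul, Finset.mul_sum]
  apply Finset.sum_congr rfl
  intro m _
  ring

lemma conv_sum_right {α : Type*} (s : Finset α) (f : PowerSeries ℝ) (g : α → PowerSeries ℝ) :
    conv w f (∑ i ∈ s, g i) = ∑ i ∈ s, conv w f (g i) := by
  classical
  induction s using Finset.induction with
  | empty =>
    ext N
    simp [coeff_conv]
  | insert _ _ hni ih =>
    rw [Finset.sum_insert hni, conv_add_right, ih, Finset.sum_insert hni]

lemma conv_split (hw : ∀ N, w N 0 = 1) (a g : PowerSeries ℝ) :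
    conv w a g = conv w (a - 1) g + g := by
  have ha : a = (a - 1) + 1 := by ring
  calc conv w a g = conv w ((a - 1) + 1) g := by rw [← ha]
    _ = conv w (a - 1) g + conv w 1 g := conv_add_left w _ _ _
    _ = conv w (a - 1) g + g := by rw [conv_one_left w hw]

lemma convPow_a_eq (hw : ∀ N, w N 0 = 1) (a : PowerSeries ℝ) (s : ℕ) :
    convPow w a s = ∑ i ∈ range (s + 1), ((s.choose i : ℝ)) • convPow w (a - 1) i := by
  induction s with
  | zero => simp [convPow]
  | succ s ih =>
    have h0 : convPow w a (s + 1) = conv w a (convPow w a s) := rfl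
    rw [h0, ih, conv_sum_right]
    have hterm : ∀ i ∈ range (s + 1), conv w a ((s.choose i : ℝ) • convPow w (a - 1) i)
        = (s.choose i : ℝ) • convPow w (a - 1) (i + 1)
          + (s.choose i : ℝ) • convPow w (a - 1) i := by
      intro i _
      rw [conv_smul_right, conv_split w hw, smul_add]
      rfl
    rw [Finset.sum_congr rfl hterm, Finset.sum_add_distrib]
    rw [Finset.sum_range_succ' (fun i => (((s + 1).choose i : ℝ)) • convPow w (a - 1) i) (s + 1)]
    simp only [Nat.choose_succ_succ s, Nat.cast_add, add_smul, Nat.choose_zero_right,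
      Nat.cast_one, one_smul]
    rw [Finset.sum_add_distrib]
    have key : (∑ i ∈ range (s + 1), ((s.choose (i + 1) : ℝ)) • convPow w (a - 1) (i + 1))
        + convPow w (a - 1) 0
        = ∑ i ∈ range (s + 1), ((s.choose i : ℝ)) • convPow w (a - 1) i := by
      have h1 := Finset.sum_range_succ' (fun i => ((s.choose i : ℝ)) • convPow w (a - 1) i) (s + 1)
      have h2 := Finset.sum_range_succ (fun i => ((s.choose i : ℝ)) • convPow w (a - 1) i) (s + 1)
      simp only [Nat.choose_zero_right, Nat.cast_one, one_smul] at h1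
      rw [Nat.choose_succ_self] at h2
      simp only [Nat.cast_zero, zero_smul, add_zero] at h2
      rw [← h2, h1]
    rw [← key]
    abel

lemma binom_inv (c d : ℕ → ℝ) (h : ∀ s, d s = ∑ i ∈ range (s + 1), (s.choose i : ℝ) * c i) :
    ∀ n, c n = ∑ s ∈ range (n + 1), (-1 : ℝ) ^ (n - s) * (n.choose s : ℝ) * d s := by
  intro n
  have ID2 : ∀ i, ∑ s ∈ range (n + 1), (-1 : ℝ) ^ (n - s) * (n.choose s : ℝ) * (s.choose i : ℝ)
      = if i = n then 1 else 0 := by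
    intro i
    have h0 := inner_id n i 0
    simp only [Nat.choose_zero_right, Nat.cast_one, mul_one, Nat.add_zero] at h0
    rw [h0]
    by_cases hin : i = n
    · subst hin
      rw [if_pos le_rfl, if_pos rfl, Nat.choose_self, Nat.sub_self, Nat.choose_zero_right]
      norm_num
    · rw [if_neg hin]
      by_cases hle : n ≤ i
      · rw [if_pos hle, Nat.choose_eq_zero_of_lt (by omega)]
        norm_num
      · rw [if_neg hle]
  calc c n = ∑ i ∈ range (n + 1), (if i = n then (1:ℝ) else 0) * c i := by
        rw [Finset.sum_eq_single n]
        · simp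
        · intro i _ hne; simp [hne]
        · intro hn; simp at hn
    _ = ∑ i ∈ range (n + 1),
          (∑ s ∈ range (n + 1), (-1 : ℝ) ^ (n - s) * (n.choose s : ℝ) * (s.choose i : ℝ)) * c i := by
        apply Finset.sum_congr rfl; intro i _; rw [ID2]
    _ = ∑ s ∈ range (n + 1), ∑ i ∈ range (n + 1),
          (-1 : ℝ) ^ (n - s) * (n.choose s : ℝ) * (s.choose i : ℝ) * c i := by
        rw [Finset.sum_comm]
        apply Finset.sum_congr rfl; intro i _
        rw [Finset.sum_mul]
    _ = ∑ s ∈ range (n + 1), (-1 : ℝ) ^ (n - s) * (n.choose s : ℝ) * d s := by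
        apply Finset.sum_congr rfl
        intro s hs
        rw [Finset.mem_range] at hs
        have hsub : range (s + 1) ⊆ range (n + 1) := Finset.range_subset_range.mpr (by omega)
        have hds : d s = ∑ i ∈ range (n + 1), (s.choose i : ℝ) * c i := by
          rw [h s]
          refine Finset.sum_subset hsub ?_
          intro i _ hi2
          rw [Finset.mem_range, not_lt] at hi2
          rw [Nat.choose_eq_zero_of_lt (by omega)]
          norm_num
        rw [hds, Finset.mul_sum]
        apply Finset.sum_congr rfl; intro i _
        ring
end ConvAlg

section Frac
variable {q : ℕ}

lemma frac_addpow (hq : 2 ≤ q) {a : PowerSeries ℝ} (ha : IsFractal q a) :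
    ∀ k u v : ℕ, u < q ^ k → coeff (u + q ^ k * v) a = coeff u a * coeff v a := by
  intro k
  induction k with
  | zero =>
    intro u v hu
    have hu0 : u = 0 := by simpa using hu
    subst hu0
    simp [ha.1]
  | succ k ih =>
    intro u v hu
    have hqpos : 0 < q := by omega
    have h1 : q * (q ^ k * v) = q ^ (k + 1) * v := by rw [pow_succ]; ring
    have hdm := Nat.div_add_mod u q
    have key : u + q ^ (k + 1) * v = q * (u / q + q ^ k * v) + u % q := by
      rw [Nat.mul_add]
      omega
    have hdiv : u / q < q ^ k := by
      rw [Nat.div_lt_iff_lt_mul hqpos]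
      rw [pow_succ] at hu
      exact hu
    rw [key, ha.2 _ _ (Nat.mod_lt u hqpos), ih _ _ hdiv]
    have hu2 : coeff u a = coeff (u / q) a * coeff (u % q) a := by
      conv_lhs => rw [← Nat.div_add_mod u q]
      exact ha.2 _ _ (Nat.mod_lt u hqpos)
    rw [hu2]
    ring

lemma frac_scale (hq : 2 ≤ q) {a : PowerSeries ℝ} (ha : IsFractal q a) (k i : ℕ) :
    coeff (q ^ k * i) a = coeff i a := by
  have h := frac_addpow hq ha k 0 i (Nat.pow_pos (by omega))
  simpa [ha.1] using h

lemma convPow_order (w : ℕ → ℕ → ℝ) (f : PowerSeries ℝ) (hf : coeff 0 f = 0) :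
    ∀ n N : ℕ, N < n → coeff N (convPow w f n) = 0 := by
  intro n
  induction n with
  | zero => intro N h; exact absurd h (Nat.not_lt_zero N)
  | succ n ih =>
    intro N hN
    show coeff N (conv w f (convPow w f n)) = 0
    rw [coeff_conv]
    apply Finset.sum_eq_zero
    intro m hm
    rw [Finset.mem_range] at hm
    rcases Nat.eq_zero_or_pos m with h0 | h0
    · subst h0; rw [hf]; ring
    · rw [ih (N - m) (by omega)]; ring

lemma conv_low (hq : 2 ≤ q) {N : ℕ} (hN : N < q) (f g : PowerSeries ℝ) :
    coeff N (conv (Wq q) f g) = coeff N (f * g) := by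
  rw [coeff_conv, PowerSeries.coeff_mul, Finset.Nat.sum_antidiagonal_eq_sum_range_succ_mk]
  apply Finset.sum_congr rfl
  intro m hm
  rw [Finset.mem_range] at hm
  have hW : Wq q N m = 1 := Wq_eq_one (fun r => by
    rcases Nat.eq_zero_or_pos r with h0 | h0
    · simp [h0, Nat.mod_one]
    · have hqr : N < q ^ r := lt_of_lt_of_le hN (Nat.le_self_pow (by omega) q)
      rw [Nat.mod_eq_of_lt (by omega), Nat.mod_eq_of_lt hqr]
      omega)
  rw [hW]; ring

lemma convPow_low (hq : 2 ≤ q) (f : PowerSeries ℝ) :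
    ∀ (n : ℕ) {N : ℕ}, N < q → coeff N (convPow (Wq q) f n) = coeff N (f ^ n) := by
  intro n
  induction n with
  | zero => intro N _; simp [convPow]
  | succ n ih =>
    intro N hN
    show coeff N (conv (Wq q) f (convPow (Wq q) f n)) = _
    rw [conv_low hq hN, pow_succ, mul_comm (f ^ n) f, PowerSeries.coeff_mul,
      PowerSeries.coeff_mul]
    apply Finset.sum_congr rfl
    intro p hp
    have hmem := Finset.HasAntidiagonal.mem_antidiagonal.mp hp
    rw [ih (by omega)]

lemma convPow_scale (hq : 2 ≤ q) (k : ℕ) (f : PowerSeries ℝ)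
    (hf : ∀ i, coeff (q ^ k * i) f = coeff i f) :
    ∀ j : ℕ, ∀ {n : ℕ}, n < q →
      coeff (q ^ k * n) (convPow (Wq q) f j) = coeff n (convPow (Wq q) f j) := by
  have hqk : 0 < q ^ k := Nat.pow_pos (by omega)
  intro j
  induction j with
  | zero =>
    intro n hn
    simp only [convPow, PowerSeries.coeff_one]
    by_cases h0 : n = 0
    · simp [h0]
    · rw [if_neg (Nat.mul_ne_zero (pow_ne_zero k (by omega)) h0), if_neg h0]
  | succ j ih =>
    intro n hn
    have hlt : ∀ {x y : ℕ}, x < y → q ^ k * x < q ^ k * y := fun {x y} hxy => by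
      have h1 := Nat.mul_le_mul_left (q ^ k) (by omega : x + 1 ≤ y)
      have h2 : q ^ k * (x + 1) = q ^ k * x + q ^ k := Nat.mul_succ _ _
      omega
    show coeff (q ^ k * n) (conv (Wq q) f (convPow (Wq q) f j))
        = coeff n (conv (Wq q) f (convPow (Wq q) f j))
    rw [coeff_conv, coeff_conv]
    have hsub : (range (n + 1)).image (fun i => q ^ k * i) ⊆ range (q ^ k * n + 1) := by
      intro m hm
      rcases Finset.mem_image.mp hm with ⟨i, hi, rfl⟩
      rw [Finset.mem_range] at hi ⊢
      have := Nat.mul_le_mul_left (q ^ k) (by omega : i ≤ n)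
      omega
    rw [← Finset.sum_subset hsub]
    · rw [Finset.sum_image (by intro x _ y _ h; exact Nat.eq_of_mul_eq_mul_left hqk h)]
      apply Finset.sum_congr rfl
      intro i hi
      rw [Finset.mem_range] at hi
      have hWlow : Wq q n i = 1 := Wq_eq_one (fun r => by
        rcases Nat.eq_zero_or_pos r with h0 | h0
        · simp [h0, Nat.mod_one]
        · have hqr : n < q ^ r := lt_of_lt_of_le hn (Nat.le_self_pow (by omega) q)
          rw [Nat.mod_eq_of_lt (by omega), Nat.mod_eq_of_lt hqr]
          omega)
      have hWhigh : Wq q (q ^ k * n) (q ^ k * i) = 1 := Wq_eq_one (fun r => by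
        by_cases hr : r ≤ k
        · have hdvd : q ^ r ∣ q ^ k * i := Dvd.dvd.mul_right (pow_dvd_pow q hr) i
          rw [Nat.mod_eq_zero_of_dvd hdvd]
          exact Nat.zero_le _
        · push_neg at hr
          have h1 : q ^ k * i < q ^ r := by
            calc q ^ k * i < q ^ k * q := hlt (by omega)
              _ = q ^ (k + 1) := by rw [pow_succ]
              _ ≤ q ^ r := Nat.pow_le_pow_right (by omega) (by omega)
          have h2 : q ^ k * n < q ^ r := by
            calc q ^ k * n < q ^ k * q := hlt (by omega)
              _ = q ^ (k + 1) := by rw [pow_succ]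
              _ ≤ q ^ r := Nat.pow_le_pow_right (by omega) (by omega)
          rw [Nat.mod_eq_of_lt h1, Nat.mod_eq_of_lt h2]
          exact Nat.mul_le_mul_left _ (by omega))
      rw [hWlow, hWhigh, hf i, show q ^ k * n - q ^ k * i = q ^ k * (n - i) by rw [Nat.mul_sub], ih (by omega : n - i < q)]
    · intro m hm hm2
      by_cases hW : ∀ r, m % q ^ r ≤ (q ^ k * n) % q ^ r
      · exfalso
        apply hm2
        have hk := hW k
        have : (q ^ k * n) % q ^ k = 0 := by simp [Nat.mul_mod_right]
        rw [this, Nat.le_zero] at hk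
        have hdvd : q ^ k ∣ m := Nat.dvd_of_mod_eq_zero hk
        rcases hdvd with ⟨i, rfl⟩
        rw [Finset.mem_range] at hm
        refine Finset.mem_image.mpr ⟨i, Finset.mem_range.mpr ?_, rfl⟩
        have := le_of_dig hq hW
        have h3 := Nat.le_of_mul_le_mul_left (by omega : q ^ k * i ≤ q ^ k * n) hqk
        omega
      · rw [Wq_eq_zero hW]; ring
end Frac

section Split
variable {q : ℕ}

lemma mod_split (hq : 2 ≤ q) {k u : ℕ} (hu : u < q ^ k) (v r : ℕ) :
    (u + q ^ k * v) % q ^ r = if r ≤ k then u % q ^ r else u + q ^ k * (v % q ^ (r - k)) := by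
  have hq0 : 0 < q := by omega
  split_ifs with h
  · have hfac : q ^ k * v = q ^ r * (q ^ (k - r) * v) := by
      rw [← mul_assoc, ← pow_add, show r + (k - r) = k by omega]
    rw [hfac, Nat.add_mul_mod_self_left]
  · push_neg at h
    have hrk : 0 < q ^ (r - k) := Nat.pow_pos hq0
    have hdm := Nat.div_add_mod v (q ^ (r - k))
    have h2 : u + q ^ k * v = (u + q ^ k * (v % q ^ (r - k))) + q ^ r * (v / q ^ (r - k)) := by
      have h3 : q ^ k * (q ^ (r - k) * (v / q ^ (r - k))) = q ^ r * (v / q ^ (r - k)) := by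
        rw [← mul_assoc, ← pow_add, show k + (r - k) = r by omega]
      calc u + q ^ k * v = u + q ^ k * (q ^ (r - k) * (v / q ^ (r - k)) + v % q ^ (r - k)) := by
            rw [hdm]
        _ = (u + q ^ k * (v % q ^ (r - k))) + q ^ k * (q ^ (r - k) * (v / q ^ (r - k))) := by ring
        _ = (u + q ^ k * (v % q ^ (r - k))) + q ^ r * (v / q ^ (r - k)) := by rw [h3]
    rw [h2, Nat.add_mul_mod_self_left]
    apply Nat.mod_eq_of_lt
    have h4 : v % q ^ (r - k) ≤ q ^ (r - k) - 1 := by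
      have := Nat.mod_lt v hrk
      omega
    have h5 : q ^ k * (v % q ^ (r - k)) ≤ q ^ k * (q ^ (r - k) - 1) :=
      Nat.mul_le_mul_left _ h4
    have h6 : q ^ k * (q ^ (r - k) - 1) = q ^ r - q ^ k := by
      rw [Nat.mul_sub, mul_one, ← pow_add, show k + (r - k) = r by omega]
    have h8 : q ^ k ≤ q ^ r := Nat.pow_le_pow_right (by omega) (by omega)
    revert h5 h6
    generalize q ^ k * (v % q ^ (r - k)) = A
    generalize q ^ k * (q ^ (r - k) - 1) = B
    omega

lemma dig_join (hq : 2 ≤ q) {k u L : ℕ} (hu : u < q ^ k) (hL : L < q ^ k) (v H : ℕ) :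
    (∀ r, (u + q ^ k * v) % q ^ r ≤ (L + q ^ k * H) % q ^ r)
      ↔ (∀ r, u % q ^ r ≤ L % q ^ r) ∧ (∀ r, v % q ^ r ≤ H % q ^ r) := by
  constructor
  · intro h
    have huL : u ≤ L := by
      have hk := h k
      rw [mod_split hq hu, mod_split hq hL, if_pos le_rfl, if_pos le_rfl,
        Nat.mod_eq_of_lt hu, Nat.mod_eq_of_lt hL] at hk
      exact hk
    constructor
    · intro r
      by_cases hr : r ≤ k
      · have hh := h r
        rwa [mod_split hq hu, mod_split hq hL, if_pos hr, if_pos hr] at hh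
      · push_neg at hr
        have hur : u < q ^ r := lt_of_lt_of_le hu (Nat.pow_le_pow_right (by omega) (by omega))
        have hLr : L < q ^ r := lt_of_lt_of_le hL (Nat.pow_le_pow_right (by omega) (by omega))
        rw [Nat.mod_eq_of_lt hur, Nat.mod_eq_of_lt hLr]
        exact huL
    · intro r
      rcases Nat.eq_zero_or_pos r with h0 | h0
      · simp [h0, Nat.mod_one]
      · have hh := h (k + r)
        rw [mod_split hq hu, mod_split hq hL, if_neg (by omega), if_neg (by omega),
          show k + r - k = r by omega] at hh
        by_contra hc
        push_neg at hc
        have h6 : q ^ k * (H % q ^ r + 1) ≤ q ^ k * (v % q ^ r) :=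
          Nat.mul_le_mul_left _ (by omega)
        have h7 : q ^ k * (H % q ^ r + 1) = q ^ k * (H % q ^ r) + q ^ k := Nat.mul_succ _ _
        omega
  · rintro ⟨h1, h2⟩ r
    rw [mod_split hq hu, mod_split hq hL]
    split_ifs with hr
    · exact h1 r
    · have huL : u ≤ L := le_of_dig hq h1
      have h3 := Nat.mul_le_mul_left (q ^ k) (h2 (r - k))
      revert h3
      generalize q ^ k * (v % q ^ (r - k)) = A
      generalize q ^ k * (H % q ^ (r - k)) = B
      omega

lemma convPow_split (hq : 2 ≤ q) {a : PowerSeries ℝ} (ha : IsFractal q a) (k : ℕ) :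
    ∀ s L H : ℕ, L < q ^ k →
      coeff (L + q ^ k * H) (convPow (Wq q) a s)
        = coeff L (convPow (Wq q) a s) * coeff H (convPow (Wq q) a s) := by
  have hqk : 0 < q ^ k := Nat.pow_pos (by omega)
  intro s
  induction s with
  | zero =>
    intro L H hL
    simp only [convPow, PowerSeries.coeff_one]
    by_cases hL0 : L = 0
    · subst hL0
      by_cases hH0 : H = 0
      · simp [hH0]
      · rw [if_neg (by simp; omega), if_pos rfl, if_neg hH0]
        norm_num
    · rw [if_neg (by omega), if_neg hL0]
      norm_num
  | succ s ih =>
    intro L H hL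
    have hN : L + q ^ k * H + 1 ≤ q ^ k * (H + 1) := by
      have h := by exact (rfl : q ^ k * (H + 1) = q ^ k * (H + 1))
      have h2 : q ^ k * (H + 1) = q ^ k * H + q ^ k := by ring
      omega
    show coeff (L + q ^ k * H) (conv (Wq q) a (convPow (Wq q) a s)) = _
    rw [coeff_conv]
    have hext : ∑ m ∈ range (L + q ^ k * H + 1),
          Wq q (L + q ^ k * H) m * coeff m a * coeff (L + q ^ k * H - m) (convPow (Wq q) a s)
        = ∑ m ∈ range (q ^ k * (H + 1)),
          Wq q (L + q ^ k * H) m * coeff m a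
            * coeff (L + q ^ k * H - m) (convPow (Wq q) a s) := by
      apply Finset.sum_subset (Finset.range_subset_range.mpr hN)
      intro m _ hm2
      rw [Finset.mem_range, not_lt] at hm2
      rw [Wq_eq_zero_of_gt hq (by omega)]
      ring
    rw [hext]
    have hbij : ∑ m ∈ range (q ^ k * (H + 1)),
          Wq q (L + q ^ k * H) m * coeff m a
            * coeff (L + q ^ k * H - m) (convPow (Wq q) a s)
        = ∑ p ∈ range (q ^ k) ×ˢ range (H + 1),
          Wq q (L + q ^ k * H) (p.1 + q ^ k * p.2) * coeff (p.1 + q ^ k * p.2) a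
            * coeff (L + q ^ k * H - (p.1 + q ^ k * p.2)) (convPow (Wq q) a s) := by
      refine Finset.sum_nbij' (fun m => (m % q ^ k, m / q ^ k))
        (fun p => p.1 + q ^ k * p.2) ?_ ?_ ?_ ?_ ?_
      · intro m hm
        rw [Finset.mem_range] at hm
        rw [Finset.mem_product, Finset.mem_range, Finset.mem_range]
        refine ⟨Nat.mod_lt _ hqk, ?_⟩
        rw [Nat.div_lt_iff_lt_mul hqk]
        calc m < q ^ k * (H + 1) := hm
          _ = (H + 1) * q ^ k := by ring
      · intro p hp
        rw [Finset.mem_product, Finset.mem_range, Finset.mem_range] at hp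
        rw [Finset.mem_range]
        change p.1 + q ^ k * p.2 < q ^ k * (H + 1)
        have h1 : q ^ k * (p.2 + 1) ≤ q ^ k * (H + 1) := Nat.mul_le_mul_left _ (by omega)
        have h2 : q ^ k * (p.2 + 1) = q ^ k * p.2 + q ^ k := by ring
        omega
      · intro m _
        exact Nat.mod_add_div m (q ^ k)
      · intro p hp
        rw [Finset.mem_product, Finset.mem_range, Finset.mem_range] at hp
        have h1 : (p.1 + q ^ k * p.2) % q ^ k = p.1 := by
          rw [Nat.add_mul_mod_self_left, Nat.mod_eq_of_lt hp.1]
        have h2 : (p.1 + q ^ k * p.2) / q ^ k = p.2 := by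
          rw [Nat.add_mul_div_left _ _ hqk, Nat.div_eq_of_lt hp.1, zero_add]
        rw [Prod.ext_iff]
        exact ⟨h1, h2⟩
      · intro m hm
        rw [Nat.mod_add_div m (q ^ k)]
    rw [hbij, Finset.sum_product]
    have hstep : convPow (Wq q) a (s + 1) = conv (Wq q) a (convPow (Wq q) a s) := rfl
    rw [hstep, coeff_conv, coeff_conv]
    have hextR : ∑ u ∈ range (L + 1),
          Wq q L u * coeff u a * coeff (L - u) (convPow (Wq q) a s)
        = ∑ u ∈ range (q ^ k),
          Wq q L u * coeff u a * coeff (L - u) (convPow (Wq q) a s) := by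
      apply Finset.sum_subset (Finset.range_subset_range.mpr (by omega))
      intro u _ hu2
      rw [Finset.mem_range, not_lt] at hu2
      rw [Wq_eq_zero_of_gt hq (by omega)]
      ring
    rw [hextR, Finset.sum_mul_sum]
    apply Finset.sum_congr rfl
    intro u hu
    rw [Finset.mem_range] at hu
    apply Finset.sum_congr rfl
    intro v hv
    rw [Finset.mem_range] at hv
    by_cases hc1 : ∀ r, u % q ^ r ≤ L % q ^ r
    · by_cases hc2 : ∀ r, v % q ^ r ≤ H % q ^ r
      · have hWN : Wq q (L + q ^ k * H) (u + q ^ k * v) = 1 :=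
          Wq_eq_one ((dig_join hq hu hL v H).mpr ⟨hc1, hc2⟩)
        have huL : u ≤ L := le_of_dig hq hc1
        have hvH : v ≤ H := le_of_dig hq hc2
        have e1 : q ^ k * (H - v) = q ^ k * H - q ^ k * v := Nat.mul_sub _ _ _
        have e2 : q ^ k * v ≤ q ^ k * H := Nat.mul_le_mul_left _ hvH
        have hsub : L + q ^ k * H - (u + q ^ k * v) = (L - u) + q ^ k * (H - v) := by
          revert e1 e2
          generalize q ^ k * (H - v) = A
          generalize q ^ k * v = B
          generalize q ^ k * H = C
          omega
        rw [hsub, ih (L - u) (H - v) (by omega), hWN, Wq_eq_one hc1, Wq_eq_one hc2,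
          frac_addpow hq ha k u v hu]
        ring
      · have hWN : Wq q (L + q ^ k * H) (u + q ^ k * v) = 0 :=
          Wq_eq_zero (fun hcc => hc2 ((dig_join hq hu hL v H).mp hcc).2)
        rw [hWN, Wq_eq_zero hc2]
        ring
    · have hWN : Wq q (L + q ^ k * H) (u + q ^ k * v) = 0 :=
        Wq_eq_zero (fun hcc => hc1 ((dig_join hq hu hL v H).mp hcc).1)
      rw [hWN, Wq_eq_zero hc1]
      ring
end Split

/-- For a `q`-fractal series `a`, `log_∘ a = Σ_{n=1}^{q−1} l_n · Σ_{k≥0} x^{n·q^k}`,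
where `l_n = [x^n] log a`. -/
theorem stmt9 (q : ℕ) (hq : 2 ≤ q) (a : PowerSeries ℝ) (ha : IsFractal q a) :
    (∀ n k : ℕ, 1 ≤ n → n < q →
      coeff (n * q ^ k) (convLog (Wq q) a) = coeff n (logSeries a)) ∧
    (∀ N : ℕ, (¬ ∃ n k : ℕ, 1 ≤ n ∧ n < q ∧ N = n * q ^ k) →
      coeff N (convLog (Wq q) a) = 0) := by
  have hf0 : coeff 0 (a - 1) = 0 := by
    rw [map_sub, ha.1, PowerSeries.coeff_one]
    norm_num
  have hfscale : ∀ k i : ℕ, coeff (q ^ k * i) (a - 1) = coeff i (a - 1) := by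
    intro k i
    have hqk : 0 < q ^ k := Nat.pow_pos (by omega)
    rw [map_sub, map_sub, frac_scale hq ha k i, PowerSeries.coeff_one, PowerSeries.coeff_one]
    by_cases h0 : i = 0
    · simp [h0]
    · rw [if_neg h0, if_neg (Nat.mul_ne_zero (by omega) h0)]
  constructor
  · -- part 1
    intro n k hn1 hnq
    have hqk : 0 < q ^ k := Nat.pow_pos (by omega)
    rw [show n * q ^ k = q ^ k * n by ring]
    have hcoeff : coeff (q ^ k * n) (convLog (Wq q) a)
        = ∑ j ∈ Icc 1 (q ^ k * n), ((-1 : ℝ) ^ (j - 1) / j)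
            * coeff (q ^ k * n) (convPow (Wq q) (a - 1) j) := by
      simp [convLog]
    have hlog : coeff n (logSeries a)
        = ∑ j ∈ Icc 1 n, ((-1 : ℝ) ^ (j - 1) / j) * coeff n ((a - 1) ^ j) := by
      simp [logSeries]
    rw [hcoeff, hlog]
    have hterm : ∀ j ∈ Icc 1 (q ^ k * n),
        ((-1 : ℝ) ^ (j - 1) / j) * coeff (q ^ k * n) (convPow (Wq q) (a - 1) j)
          = ((-1 : ℝ) ^ (j - 1) / j) * coeff n ((a - 1) ^ j) := by
      intro j _
      rw [convPow_scale hq k (a - 1) (hfscale k) j hnq, convPow_low hq (a - 1) j hnq]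
    rw [Finset.sum_congr rfl hterm]
    rw [← Finset.sum_subset (Finset.Icc_subset_Icc_right (Nat.le_mul_of_pos_left n hqk))]
    intro j hj hj2
    rw [Finset.mem_Icc] at hj
    rw [Finset.mem_Icc, not_and, not_le] at hj2
    have hjn : n < j := hj2 hj.1
    rw [← convPow_low hq (a - 1) j hnq, convPow_order (Wq q) (a - 1) hf0 j n hjn]
    ring
  · -- part 2
    intro N hnot
    by_cases hN0 : N = 0
    · subst hN0
      simp [convLog]
    have hN1 : 1 ≤ N := by omega
    -- find the split position
    have hex : ∃ m : ℕ, ¬ q ^ (m + 1) ∣ N := by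
      refine ⟨N, fun hdvd => ?_⟩
      have h1 := Nat.le_of_dvd (by omega) hdvd
      have h2 := lt_pow_add hq N 1
      omega
    classical
    set k0 := Nat.find hex with hk0
    have hspec : ¬ q ^ (k0 + 1) ∣ N := Nat.find_spec hex
    have hdvd0 : q ^ k0 ∣ N := by
      rcases Nat.eq_zero_or_pos k0 with h0 | h0
      · rw [h0, pow_zero]; exact one_dvd N
      · have := Nat.find_min hex (m := k0 - 1) (by omega)
        push_neg at this
        rwa [show k0 - 1 + 1 = k0 by omega] at this
    set k := k0 + 1 with hk
    have hqk : 0 < q ^ k := Nat.pow_pos (by omega)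
    set L := N % q ^ k with hLdef
    set H := N / q ^ k with hHdef
    have hLlt : L < q ^ k := Nat.mod_lt N hqk
    have hNdec : N = L + q ^ k * H := (Nat.mod_add_div N (q ^ k)).symm
    have hL1 : 1 ≤ L := by
      rcases Nat.eq_zero_or_pos L with h0 | h0
      · exact absurd (Nat.dvd_of_mod_eq_zero h0) hspec
      · exact h0
    have hH1 : 1 ≤ H := by
      rcases Nat.eq_zero_or_pos H with h0 | h0
      · exfalso
        have hNlt : N < q ^ k := by
          have hz : q ^ k * H = 0 := by rw [h0, Nat.mul_zero]
          omega
        obtain ⟨d, hd⟩ := hdvd0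
        have hd1 : 1 ≤ d := by
          rcases Nat.eq_zero_or_pos d with h1 | h1
          · exfalso; rw [h1, Nat.mul_zero] at hd; omega
          · exact h1
        have hdq : d < q := by
          by_contra hc
          push_neg at hc
          have h5 : q ^ k0 * q ≤ q ^ k0 * d := Nat.mul_le_mul_left _ hc
          rw [← pow_succ] at h5
          have hkk : q ^ k = q ^ (k0 + 1) := by rw [hk]
          omega
        exact hnot ⟨d, k0, hd1, hdq, by rw [hd]; ring⟩
      · exact h0
    -- now the main computation
    have hw : ∀ M : ℕ, Wq q M 0 = 1 := fun M => Wq_zero_right M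
    have hDc : ∀ M s : ℕ, coeff M (convPow (Wq q) a s)
        = ∑ i ∈ range (s + 1), (s.choose i : ℝ) * coeff M (convPow (Wq q) (a - 1) i) := by
      intro M s
      rw [convPow_a_eq (Wq q) hw a s, map_sum]
      apply Finset.sum_congr rfl
      intro i _
      rw [PowerSeries.coeff_smul, smul_eq_mul]
    have hbin1 : ∀ m : ℕ, coeff N (convPow (Wq q) (a - 1) m)
        = ∑ s ∈ range (m + 1), (-1 : ℝ) ^ (m - s) * (m.choose s : ℝ)
            * coeff N (convPow (Wq q) a s) :=
      binom_inv _ _ (fun s => hDc N s)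
    have hsplit : ∀ s : ℕ, coeff N (convPow (Wq q) a s)
        = coeff L (convPow (Wq q) a s) * coeff H (convPow (Wq q) a s) := by
      intro s
      conv_lhs => rw [hNdec]
      exact convPow_split hq ha k s L H hLlt
    have hDL : ∀ M s : ℕ, s ≤ N → coeff M (convPow (Wq q) a s)
        = ∑ i ∈ range (N + 1), (s.choose i : ℝ) * coeff M (convPow (Wq q) (a - 1) i) := by
      intro M s hs
      rw [hDc M s]
      refine Finset.sum_subset (Finset.range_subset_range.mpr (by omega)) ?_
      intro i _ hi2
      rw [Finset.mem_range, not_lt] at hi2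
      rw [Nat.choose_eq_zero_of_lt (by omega)]
      norm_num
    have hcoeff : coeff N (convLog (Wq q) a)
        = ∑ m ∈ Icc 1 N, ((-1 : ℝ) ^ (m - 1) / m) * coeff N (convPow (Wq q) (a - 1) m) := by
      simp [convLog]
    have hS1 : coeff N (convLog (Wq q) a)
        = ∑ m ∈ Icc 1 N, ∑ s ∈ range (m + 1), ∑ i ∈ range (N + 1), ∑ j ∈ range (N + 1),
            ((-1 : ℝ) ^ (m - 1) / m) * (((-1 : ℝ) ^ (m - s) * (m.choose s : ℝ))
              * (((s.choose i : ℝ) * coeff L (convPow (Wq q) (a - 1) i))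
                * ((s.choose j : ℝ) * coeff H (convPow (Wq q) (a - 1) j)))) := by
      rw [hcoeff]
      apply Finset.sum_congr rfl
      intro m hm
      rw [Finset.mem_Icc] at hm
      rw [hbin1 m, Finset.mul_sum]
      apply Finset.sum_congr rfl
      intro s hs
      rw [Finset.mem_range] at hs
      rw [hsplit s, hDL L s (by omega), hDL H s (by omega), Finset.sum_mul_sum]
      rw [mul_assoc]
      simp only [Finset.mul_sum]
      apply Finset.sum_congr rfl
      intro i _
      apply Finset.sum_congr rfl
      intro j _
      ring
    have hS2 : coeff N (convLog (Wq q) a)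
        = ∑ i ∈ range (N + 1), ∑ j ∈ range (N + 1), ∑ m ∈ Icc 1 N, ∑ s ∈ range (m + 1),
            ((-1 : ℝ) ^ (m - 1) / m) * (((-1 : ℝ) ^ (m - s) * (m.choose s : ℝ))
              * (((s.choose i : ℝ) * coeff L (convPow (Wq q) (a - 1) i))
                * ((s.choose j : ℝ) * coeff H (convPow (Wq q) (a - 1) j)))) := by
      rw [hS1]
      rw [show (∑ m ∈ Icc 1 N, ∑ s ∈ range (m + 1), ∑ i ∈ range (N + 1), ∑ j ∈ range (N + 1),
            ((-1 : ℝ) ^ (m - 1) / m) * (((-1 : ℝ) ^ (m - s) * (m.choose s : ℝ))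
              * (((s.choose i : ℝ) * coeff L (convPow (Wq q) (a - 1) i))
                * ((s.choose j : ℝ) * coeff H (convPow (Wq q) (a - 1) j)))))
          = ∑ m ∈ Icc 1 N, ∑ i ∈ range (N + 1), ∑ j ∈ range (N + 1), ∑ s ∈ range (m + 1),
            ((-1 : ℝ) ^ (m - 1) / m) * (((-1 : ℝ) ^ (m - s) * (m.choose s : ℝ))
              * (((s.choose i : ℝ) * coeff L (convPow (Wq q) (a - 1) i))
                * ((s.choose j : ℝ) * coeff H (convPow (Wq q) (a - 1) j)))) from ?_]
      · rw [Finset.sum_comm]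
        apply Finset.sum_congr rfl
        intro i _
        rw [Finset.sum_comm]
      · apply Finset.sum_congr rfl
        intro m _
        rw [Finset.sum_comm]
        apply Finset.sum_congr rfl
        intro i _
        rw [Finset.sum_comm]
    rw [hS2]
    apply Finset.sum_eq_zero
    intro i hi
    apply Finset.sum_eq_zero
    intro j hj
    have hfact : (∑ m ∈ Icc 1 N, ∑ s ∈ range (m + 1),
          ((-1 : ℝ) ^ (m - 1) / m) * (((-1 : ℝ) ^ (m - s) * (m.choose s : ℝ))
            * (((s.choose i : ℝ) * coeff L (convPow (Wq q) (a - 1) i))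
              * ((s.choose j : ℝ) * coeff H (convPow (Wq q) (a - 1) j)))))
        = (coeff L (convPow (Wq q) (a - 1) i) * coeff H (convPow (Wq q) (a - 1) j))
          * ∑ m ∈ Icc 1 N, ((-1 : ℝ) ^ (m - 1) / m) *
              (∑ s ∈ range (m + 1),
                (-1 : ℝ) ^ (m - s) * (m.choose s : ℝ) * (s.choose i : ℝ) * (s.choose j : ℝ)) := by
      rw [Finset.mul_sum]
      apply Finset.sum_congr rfl
      intro m _
      rw [Finset.mul_sum, Finset.mul_sum]
      apply Finset.sum_congr rfl
      intro s _
      ring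
    rw [hfact]
    by_cases hu0 : coeff L (convPow (Wq q) (a - 1) i) = 0
    · rw [hu0]; ring
    by_cases hv0 : coeff H (convPow (Wq q) (a - 1) j) = 0
    · rw [hv0]; ring
    have hi1 : 1 ≤ i := by
      by_contra hc
      push_neg at hc
      apply hu0
      have hieq : i = 0 := by omega
      subst hieq
      show coeff L (1 : PowerSeries ℝ) = 0
      rw [PowerSeries.coeff_one, if_neg (by omega)]
    have hj1 : 1 ≤ j := by
      by_contra hc
      push_neg at hc
      apply hv0
      have hjeq : j = 0 := by omega
      subst hjeq
      show coeff H (1 : PowerSeries ℝ) = 0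
      rw [PowerSeries.coeff_one, if_neg (by omega)]
    have hiL : i ≤ L := by
      by_contra hc
      push_neg at hc
      exact hu0 (convPow_order (Wq q) (a - 1) hf0 i L hc)
    have hjH : j ≤ H := by
      by_contra hc
      push_neg at hc
      exact hv0 (convPow_order (Wq q) (a - 1) hf0 j H hc)
    have hijN : i + j ≤ N := by
      have h1 : H ≤ q ^ k * H := Nat.le_mul_of_pos_left H hqk
      omega
    rw [Kzero i j N hi1 hj1 hijN, mul_zero]
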